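/- The matrix R^{(2)} = (1/4)·I − (1/8)·(V₂ ⊗ I_{ℂ²}) − (1/8)·(I_{ℂ²} ⊗ V₂)(V₂ ⊗ I_{ℂ²})(I_{ℂ²} ⊗ V₂) on ℂ²⊗ℂ²⊗ℂ² is positive semidefinite and its partial traces over the second and over the third tensor factor both equal the Werner state ρ_W^{(2)}; consequently ρ_W^{(2)} is a DSO state. -/

import Mathlib

open Matrix
open scoped Kronecker ComplexOrder

namespace BellPaper

variable {α β γ : Type*} [Fintype α] [Fintype β] [Fintype γ]

/-- Partial trace over the first factor of a threefold tensor product. -/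
noncomputable def ptr1 (T : Matrix ((α × β) × γ) ((α × β) × γ) ℂ) :
    Matrix (β × γ) (β × γ) ℂ :=
  fun p q => ∑ i : α, T ((i, p.1), p.2) ((i, q.1), q.2)

/-- Partial trace over the second factor of a threefold tensor product. -/
noncomputable def ptr2 (T : Matrix ((α × β) × γ) ((α × β) × γ) ℂ) :
    Matrix (α × γ) (α × γ) ℂ :=
  fun p q => ∑ j : β, T ((p.1, j), p.2) ((q.1, j), q.2)

/-- Partial trace over the third factor of a threefold tensor product. -/
noncomputable def ptr3 (T : Matrix ((α × β) × γ) ((α × β) × γ) ℂ) :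
    Matrix (α × β) (α × β) ℂ :=
  fun p q => ∑ k : γ, T (p, k) (q, k)

/-- Partial trace over the second factor of a twofold tensor product. -/
noncomputable def ptrB (M : Matrix (α × β) (α × β) ℂ) : Matrix α α ℂ :=
  fun i i' => ∑ j : β, M (i, j) (i', j)

/-- A density matrix: positive semidefinite with unit trace. -/
def IsDensityMatrix {n : Type*} [Fintype n] (ρ : Matrix n n ℂ) : Prop :=
  ρ.PosSemidef ∧ ρ.trace = 1

/-- Source-operator of type `T₁₂₂` for a state on ℂ^{d₁}⊗ℂ^{d₂}. -/
def IsSource122 {d₁ d₂ : ℕ} (ρ : Matrix (Fin d₁ × Fin d₂) (Fin d₁ × Fin d₂) ℂ)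
    (T : Matrix ((Fin d₁ × Fin d₂) × Fin d₂) ((Fin d₁ × Fin d₂) × Fin d₂) ℂ) : Prop :=
  T.IsHermitian ∧ ptr2 T = ρ ∧ ptr3 T = ρ

/-- Source-operator of type `T₁₁₂` for a state on ℂ^{d₁}⊗ℂ^{d₂}. -/
def IsSource112 {d₁ d₂ : ℕ} (ρ : Matrix (Fin d₁ × Fin d₂) (Fin d₁ × Fin d₂) ℂ)
    (S : Matrix ((Fin d₁ × Fin d₁) × Fin d₂) ((Fin d₁ × Fin d₁) × Fin d₂) ℂ) : Prop :=
  S.IsHermitian ∧ ptr1 S = ρ ∧ ptr2 S = ρ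

/-- A DSO state: a density matrix admitting a positive semidefinite source-operator. -/
def IsDSO {d₁ d₂ : ℕ} (ρ : Matrix (Fin d₁ × Fin d₂) (Fin d₁ × Fin d₂) ℂ) : Prop :=
  IsDensityMatrix ρ ∧
    ((∃ T, T.PosSemidef ∧ IsSource122 ρ T) ∨ (∃ S, S.PosSemidef ∧ IsSource112 ρ S))

/-- A Bell class state: a density matrix admitting a density source-operator with the
special dilation property (all three partial traces equal the state). -/
def IsBellClass {d : ℕ} (ρ : Matrix (Fin d × Fin d) (Fin d × Fin d) ℂ) : Prop :=
  IsDensityMatrix ρ ∧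
    ∃ T : Matrix ((Fin d × Fin d) × Fin d) ((Fin d × Fin d) × Fin d) ℂ,
      T.PosSemidef ∧ ptr1 T = ρ ∧ ptr2 T = ρ ∧ ptr3 T = ρ

/-- The operator (spectral) norm of a matrix acting on a Euclidean space. -/
noncomputable def opNorm {n : Type*} [Fintype n] [DecidableEq n] (W : Matrix n n ℂ) : ℝ :=
  ‖Matrix.toEuclideanCLM (𝕜 := ℂ) W‖

/-- The swap (permutation) operator `V_d` on ℂ^d ⊗ ℂ^d. -/
noncomputable def swapMat (d : ℕ) : Matrix (Fin d × Fin d) (Fin d × Fin d) ℂ :=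
  fun p q => if p.1 = q.2 ∧ p.2 = q.1 then 1 else 0

/-- The Werner state on ℂ^d ⊗ ℂ^d. -/
noncomputable def werner (d : ℕ) : Matrix (Fin d × Fin d) (Fin d × Fin d) ℂ :=
  (((d : ℂ) + 1) / (d : ℂ) ^ 3) • (1 : Matrix (Fin d × Fin d) (Fin d × Fin d) ℂ)
    - ((d : ℂ) ^ 2)⁻¹ • swapMat d

/-- The triple of indices of a point of the threefold product. -/
def triple {d : ℕ} (p : (Fin d × Fin d) × Fin d) : Fin 3 → Fin d := ![p.1.1, p.1.2, p.2]

/-- The unitary permuting the three tensor factors of ℂ^d ⊗ ℂ^d ⊗ ℂ^d according to π. -/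
noncomputable def permMat (d : ℕ) (π : Equiv.Perm (Fin 3)) :
    Matrix ((Fin d × Fin d) × Fin d) ((Fin d × Fin d) × Fin d) ℂ :=
  fun p q => if ∀ i, triple p (π i) = triple q i then 1 else 0

/-- The antisymmetrization projection `Q_d^{(-)}` on ℂ^d ⊗ ℂ^d ⊗ ℂ^d. -/
noncomputable def antisym (d : ℕ) :
    Matrix ((Fin d × Fin d) × Fin d) ((Fin d × Fin d) × Fin d) ℂ :=
  (6 : ℂ)⁻¹ • ∑ π : Equiv.Perm (Fin 3), (((Equiv.Perm.sign π : ℤ) : ℂ)) • permMat d π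

/-- Tensor product of two vectors. -/
def tens {m n : Type*} (u : m → ℂ) (v : n → ℂ) : m × n → ℂ := fun p => u p.1 * v p.2

/-- The rank-one operator |v⟩⟨v|. -/
noncomputable def outer {n : Type*} (v : n → ℂ) : Matrix n n ℂ :=
  Matrix.vecMulVec v (star v)


noncomputable def V13 : Matrix ((Fin 2 × Fin 2) × Fin 2) ((Fin 2 × Fin 2) × Fin 2) ℂ :=
  fun p q => if p.1.1 = q.2 ∧ p.1.2 = q.1.2 ∧ p.2 = q.1.1 then 1 else 0

lemma psd_add {n : Type*} [Fintype n] {A B : Matrix n n ℂ}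
    (hA : A.PosSemidef) (hB : B.PosSemidef) : (A + B).PosSemidef := by
  refine PosSemidef.of_dotProduct_mulVec_nonneg (hA.1.add hB.1) fun x => ?_
  rw [add_mulVec, dotProduct_add]
  exact add_nonneg (hA.dotProduct_mulVec_nonneg x) (hB.dotProduct_mulVec_nonneg x)

lemma psd_smul {n : Type*} [Fintype n] {A : Matrix n n ℂ} (hA : A.PosSemidef)
    {c : ℝ} (hc : 0 ≤ c) : ((c : ℂ) • A).PosSemidef := by
  refine PosSemidef.of_dotProduct_mulVec_nonneg ?_ ?_
  · unfold Matrix.IsHermitian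
    rw [conjTranspose_smul, hA.1]
    congr 1
    simp
  · intro x
    rw [smul_mulVec, dotProduct_smul]
    have h0 : (0:ℂ) ≤ (c:ℂ) := by rw [Complex.le_def]; simp [hc]
    exact mul_nonneg h0 (hA.dotProduct_mulVec_nonneg x)

lemma sub_sq_psd {n : Type*} [Fintype n] [DecidableEq n] (A : Matrix n n ℂ) (h : Aᴴ = A) :
    ((1 - A) * (1 - A)).PosSemidef := by
  have e : (1 - A) * (1 - A) = (1 - A)ᴴ * (1 - A) := by
    rw [conjTranspose_sub, conjTranspose_one, h]
  rw [e]; exact posSemidef_conjTranspose_mul_self _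

lemma add_sq_psd {n : Type*} [Fintype n] [DecidableEq n] (A : Matrix n n ℂ) (h : Aᴴ = A) :
    ((1 + A) * (1 + A)).PosSemidef := by
  have e : (1 + A) * (1 + A) = (1 + A)ᴴ * (1 + A) := by
    rw [conjTranspose_add, conjTranspose_one, h]
  rw [e]; exact posSemidef_conjTranspose_mul_self _

lemma swap_herm (d : ℕ) : (swapMat d)ᴴ = swapMat d := by
  ext ⟨a,b⟩ ⟨c,e⟩
  simp only [conjTranspose_apply, swapMat]
  split_ifs with h1 h2 h2 <;> simp_all

lemma swap_sq : swapMat 2 * swapMat 2 = 1 := by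
  ext ⟨a,b⟩ ⟨c,e⟩
  fin_cases a <;> fin_cases b <;> fin_cases c <;> fin_cases e <;>
    simp [swapMat, Matrix.mul_apply, Fintype.sum_prod_type, Fin.sum_univ_two,
      Matrix.one_apply, Prod.ext_iff]

lemma V13_herm : V13ᴴ = V13 := by
  ext ⟨⟨a,b⟩,c⟩ ⟨⟨d,e⟩,f⟩
  simp only [conjTranspose_apply, V13]
  split_ifs with h1 h2 h2 <;> simp_all <;> tauto

set_option maxHeartbeats 2000000 in
lemma triple_prod (VI IV : Matrix ((Fin 2 × Fin 2) × Fin 2) ((Fin 2 × Fin 2) × Fin 2) ℂ)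
    (hVI : VI = swapMat 2 ⊗ₖ (1 : Matrix (Fin 2) (Fin 2) ℂ))
    (hIV : IV = Matrix.reindex (Equiv.prodAssoc (Fin 2) (Fin 2) (Fin 2)).symm
        (Equiv.prodAssoc (Fin 2) (Fin 2) (Fin 2)).symm
        ((1 : Matrix (Fin 2) (Fin 2) ℂ) ⊗ₖ swapMat 2)) :
    IV * VI * IV = V13 := by
  subst hVI hIV
  ext ⟨⟨a,b⟩,c⟩ ⟨⟨d,e⟩,f⟩
  fin_cases a <;> fin_cases b <;> fin_cases c <;> fin_cases d <;> fin_cases e <;> fin_cases f <;>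
    simp [V13, swapMat, Matrix.mul_apply, Fintype.sum_prod_type, Fin.sum_univ_two,
      Matrix.one_apply, Prod.ext_iff]

lemma V13_sq : V13 * V13 = 1 := by
  ext ⟨⟨a,b⟩,c⟩ ⟨⟨d,e⟩,f⟩
  fin_cases a <;> fin_cases b <;> fin_cases c <;> fin_cases d <;> fin_cases e <;> fin_cases f <;>
    simp [V13, Matrix.mul_apply, Fintype.sum_prod_type, Fin.sum_univ_two,
      Matrix.one_apply, Prod.ext_iff]

lemma kron_conjT {m n : Type*} [Fintype m] [Fintype n] [DecidableEq m] [DecidableEq n]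
    (A : Matrix m m ℂ) (B : Matrix n n ℂ) : (A ⊗ₖ B)ᴴ = Aᴴ ⊗ₖ Bᴴ := by
  ext ⟨p,q⟩ ⟨r,s⟩
  simp [Matrix.conjTranspose_apply, Matrix.kroneckerMap_apply, star_mul']

lemma werner_two_eq : werner 2 = ((3:ℂ)/8) • (1 : Matrix (Fin 2 × Fin 2) (Fin 2 × Fin 2) ℂ)
    - ((1:ℂ)/4) • swapMat 2 := by
  unfold werner
  norm_num

lemma werner_two_psd : (werner 2).PosSemidef := by
  have h : werner 2 = (((5/32 : ℝ)):ℂ) • ((1 - swapMat 2) * (1 - swapMat 2))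
      + (((1/32 : ℝ)):ℂ) • ((1 + swapMat 2) * (1 + swapMat 2)) := by
    rw [werner_two_eq]
    have e1 : (1 - swapMat 2) * (1 - swapMat 2)
        = (2:ℂ) • (1 : Matrix (Fin 2 × Fin 2) (Fin 2 × Fin 2) ℂ) - (2:ℂ) • swapMat 2 := by
      have h1 : (1 - swapMat 2) * (1 - swapMat 2) = 1 - swapMat 2 - swapMat 2 + swapMat 2 * swapMat 2 := by noncomm_ring
      rw [h1, swap_sq]
      module
    have e2 : (1 + swapMat 2) * (1 + swapMat 2)
        = (2:ℂ) • (1 : Matrix (Fin 2 × Fin 2) (Fin 2 × Fin 2) ℂ) + (2:ℂ) • swapMat 2 := by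
      have h1 : (1 + swapMat 2) * (1 + swapMat 2) = 1 + swapMat 2 + swapMat 2 + swapMat 2 * swapMat 2 := by noncomm_ring
      rw [h1, swap_sq]
      module
    rw [e1, e2]
    push_cast
    module
  rw [h]
  exact psd_add (psd_smul (sub_sq_psd _ (swap_herm 2)) (by norm_num))
    (psd_smul (add_sq_psd _ (swap_herm 2)) (by norm_num))

lemma werner_two_trace : (werner 2).trace = 1 := by
  simp [werner, Matrix.trace, Matrix.diag, swapMat, Fintype.sum_prod_type, Fin.sum_univ_two,
    Matrix.one_apply]
  norm_num


set_option maxHeartbeats 2000000 in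
/-- `R^{(2)}` is a density source-operator of type `T₁₂₂` for the Werner state
on ℂ²⊗ℂ², hence `ρ_W^{(2)}` is a DSO state. -/
theorem werner_two_isDSO
    (VI IV R : Matrix ((Fin 2 × Fin 2) × Fin 2) ((Fin 2 × Fin 2) × Fin 2) ℂ)
    (hVI : VI = swapMat 2 ⊗ₖ (1 : Matrix (Fin 2) (Fin 2) ℂ))
    (hIV : IV = Matrix.reindex (Equiv.prodAssoc (Fin 2) (Fin 2) (Fin 2)).symm
        (Equiv.prodAssoc (Fin 2) (Fin 2) (Fin 2)).symm
        ((1 : Matrix (Fin 2) (Fin 2) ℂ) ⊗ₖ swapMat 2))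
    (hR : R = (4 : ℂ)⁻¹ • (1 : Matrix ((Fin 2 × Fin 2) × Fin 2) ((Fin 2 × Fin 2) × Fin 2) ℂ)
        - (8 : ℂ)⁻¹ • VI - (8 : ℂ)⁻¹ • (IV * VI * IV)) :
    R.PosSemidef ∧ ptr2 R = werner 2 ∧ ptr3 R = werner 2 ∧ IsDSO (werner 2) := by
  have hW : IV * VI * IV = V13 := triple_prod VI IV hVI hIV
  have hVIH : VIᴴ = VI := by
    rw [hVI, kron_conjT, swap_herm, conjTranspose_one]
  have hVIsq : VI * VI = 1 := by
    rw [hVI, ← Matrix.mul_kronecker_mul, swap_sq, one_mul, Matrix.one_kronecker_one]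
  have hRdec : R = (((1/16 : ℝ)):ℂ) • ((1 - VI) * (1 - VI))
      + (((1/16 : ℝ)):ℂ) • ((1 - V13) * (1 - V13)) := by
    rw [hR, hW]
    have e1 : (1 - VI) * (1 - VI)
        = (2:ℂ) • (1 : Matrix ((Fin 2 × Fin 2) × Fin 2) ((Fin 2 × Fin 2) × Fin 2) ℂ)
          - (2:ℂ) • VI := by
      have h1 : (1 - VI) * (1 - VI) = 1 - VI - VI + VI * VI := by noncomm_ring
      rw [h1, hVIsq]
      module
    have e2 : (1 - V13) * (1 - V13)
        = (2:ℂ) • (1 : Matrix ((Fin 2 × Fin 2) × Fin 2) ((Fin 2 × Fin 2) × Fin 2) ℂ)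
          - (2:ℂ) • V13 := by
      have h1 : (1 - V13) * (1 - V13) = 1 - V13 - V13 + V13 * V13 := by noncomm_ring
      rw [h1, V13_sq]
      module
    rw [e1, e2]
    push_cast
    module
  have hRpsd : R.PosSemidef := by
    rw [hRdec]
    exact psd_add (psd_smul (sub_sq_psd _ hVIH) (by norm_num))
      (psd_smul (sub_sq_psd _ V13_herm) (by norm_num))
  have hptr2 : ptr2 R = werner 2 := by
    rw [hR, hW, hVI]
    ext ⟨a,c⟩ ⟨d,f⟩
    fin_cases a <;> fin_cases c <;> fin_cases d <;> fin_cases f <;>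
      simp [ptr2, werner, V13, swapMat, Fin.sum_univ_two, Matrix.one_apply,
        Prod.ext_iff, Matrix.sub_apply, Matrix.smul_apply] <;> norm_num
  have hptr3 : ptr3 R = werner 2 := by
    rw [hR, hW, hVI]
    ext ⟨a,b⟩ ⟨d,e⟩
    fin_cases a <;> fin_cases b <;> fin_cases d <;> fin_cases e <;>
      simp [ptr3, werner, V13, swapMat, Fin.sum_univ_two, Matrix.one_apply,
        Prod.ext_iff, Matrix.sub_apply, Matrix.smul_apply] <;> norm_num
  refine ⟨hRpsd, hptr2, hptr3, ⟨werner_two_psd, werner_two_trace⟩,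
    Or.inl ⟨R, hRpsd, hRpsd.1, hptr2, hptr3⟩⟩

end BellPaper
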